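/- arXiv:0704.3309 — 4 statements merged into one kernel-verified Lean document; each statement's English description precedes it below -/
import Mathlib

section
/- Suppose h : ℂ → ℂ is continuous, satisfies f∘h = h∘λ with |λ| > 1, h(0) = z₀, and a is a point with f^{-2}(a) = {a}. If h⁻¹(a) is nonempty, then 0 ∈ h⁻¹(a) and z₀ = a. Consequently, if f'(z₀) = λ ≠ 0 forces z₀ ∉ {z : f'(z) = 0} while f^{-2}(a) = {a} forces a to be a critical point of f, then h⁻¹(a) = ∅. -/
/-- If h is continuous, f∘h = h∘λ with |λ|>1, h(0)=z₀ and f^{-2}(a)={a},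
then nonemptiness of h⁻¹(a) forces 0 ∈ h⁻¹(a) and z₀ = a; consequently if z₀ is not a
critical point of f while a is, then h⁻¹(a) = ∅. -/
theorem stmt_2 (f h : ℂ → ℂ) (lam z₀ a : ℂ) (hlam : 1 < ‖lam‖)
    (hcont : Continuous h) (heq : ∀ w : ℂ, f (h w) = h (lam * w)) (h0 : h 0 = z₀)
    (ha : f^[2] ⁻¹' {a} = {a}) :
    ((h ⁻¹' {a}).Nonempty → (0 : ℂ) ∈ h ⁻¹' {a} ∧ z₀ = a) ∧
    (deriv f z₀ ≠ 0 → deriv f a = 0 → h ⁻¹' {a} = ∅) := by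
  have hlne : lam ≠ 0 := by
    intro h'
    simp [h'] at hlam
    linarith
  have hmain : (h ⁻¹' {a}).Nonempty → (0 : ℂ) ∈ h ⁻¹' {a} ∧ z₀ = a := by
    rintro ⟨w, hw⟩
    simp only [Set.mem_preimage, Set.mem_singleton_iff] at hw
    -- f²(h v) = h (λ² v)
    have hiter : ∀ v : ℂ, f^[2] (h v) = h (lam^2 * v) := by
      intro v
      have : f^[2] (h v) = f (f (h v)) := by
        simp [Function.iterate_succ, Function.comp]
      rw [this, heq v, heq (lam * v)]
      ring_nf
    have key : ∀ n : ℕ, h (w * (lam⁻¹ ^ 2) ^ n) = a := by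
      intro n
      induction n with
      | zero => simpa using hw
      | succ n ih =>
        have h2 : f^[2] (h (w * (lam⁻¹ ^ 2) ^ (n + 1))) = a := by
          rw [hiter]
          have : lam ^ 2 * (w * (lam⁻¹ ^ 2) ^ (n + 1)) = w * (lam⁻¹ ^ 2) ^ n := by
            have hl : lam ^ 2 * lam⁻¹ ^ 2 = 1 := by
              rw [← mul_pow, mul_inv_cancel₀ hlne, one_pow]
            rw [pow_succ]
            linear_combination (w * (lam⁻¹ ^ 2) ^ n) * hl
          rw [this, ih]
        have : h (w * (lam⁻¹ ^ 2) ^ (n + 1)) ∈ f^[2] ⁻¹' {a} := h2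
        rwa [ha, Set.mem_singleton_iff] at this
    -- limit
    have hnorm : ‖lam⁻¹ ^ 2‖ < 1 := by
      rw [norm_pow, norm_inv]
      have h1 : (1:ℝ) < ‖lam‖ := hlam
      have h0' : (0:ℝ) < ‖lam‖ := by linarith
      have : ‖lam‖⁻¹ < 1 := by
        rw [inv_lt_one_iff₀]; right; exact h1
      have h2 : (0:ℝ) ≤ ‖lam‖⁻¹ := by positivity
      nlinarith
    have htend : Filter.Tendsto (fun n : ℕ => w * (lam⁻¹ ^ 2) ^ n)
        Filter.atTop (nhds 0) := by
      have := tendsto_pow_atTop_nhds_zero_of_norm_lt_one hnorm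
      have := this.const_mul w
      simpa using this
    have htend2 : Filter.Tendsto (fun n : ℕ => h (w * (lam⁻¹ ^ 2) ^ n))
        Filter.atTop (nhds (h 0)) := (hcont.tendsto 0).comp htend
    have hconst : Filter.Tendsto (fun _ : ℕ => a) Filter.atTop (nhds a) :=
      tendsto_const_nhds
    have : h 0 = a := by
      rw [funext key] at htend2
      exact (tendsto_nhds_unique hconst htend2).symm
    constructor
    · simpa [Set.mem_preimage] using this
    · rw [← h0, this]
  refine ⟨hmain, ?_⟩
  intro hz hca
  rw [← Set.not_nonempty_iff_eq_empty]
  intro hne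
  obtain ⟨_, hz0a⟩ := hmain hne
  rw [hz0a] at hz
  exact hz hca
end

section
/- Let h be a Schröder map of f at a repelling fixed point z₀ with multiplier λ, D a forward-invariant immediate attracting or parabolic basin with fixed point a, and W a component of h⁻¹(D) with λW = W. Then for every w₀ ∈ W there is a continuous arc γ : ℝ → W with γ(0) = w₀, γ(t+1) = λγ(t) for all t, |γ(t)| → ∞ and h(γ(t)) → a as t → ∞. -/
open Filter Set

/-- For a Schröder map `h` of `f` at a repelling fixed point `z₀`, a
forward-invariant immediate attracting/parabolic basin `D` with fixed point `a`
(so the iterates of `f` converge to `a` locally uniformly on `D`), and a component `W`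
of `h⁻¹(D)` with `λW = W`: through every `w₀ ∈ W` there is a continuous arc
`γ : ℝ → W` with `γ(0) = w₀`, `γ(t+1) = λγ(t)`, `|γ(t)| → ∞` and `h(γ(t)) → a`. -/
theorem stmt_8 (f h : ℂ → ℂ) (lam z₀ a : ℂ) (hlam : 1 < ‖lam‖)
    (hf : Continuous f) (hh : Continuous h)
    (heq : ∀ w : ℂ, f (h w) = h (lam * w)) (h0 : h 0 = z₀)
    (D : Set ℂ) (hD : IsOpen D) (hDc : IsConnected D) (hfD : f '' D = D) (haD : a ∈ closure D)
    (hfa : f a = a)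
    (hbasin : TendstoLocallyUniformlyOn (fun (k : ℕ) z => f^[k] z) (fun _ => a)
      Filter.atTop D)
    (hz₀ : z₀ ∉ D)
    (W : Set ℂ) (hW : ∃ w ∈ h ⁻¹' D, W = connectedComponentIn (h ⁻¹' D) w)
    (hWinv : (fun w => lam * w) '' W = W) :
    ∀ w₀ ∈ W, ∃ γ : ℝ → ℂ, Continuous γ ∧ (∀ t : ℝ, γ t ∈ W) ∧ γ 0 = w₀ ∧
      (∀ t : ℝ, γ (t + 1) = lam * γ t) ∧
      Filter.Tendsto (fun t => ‖γ t‖) Filter.atTop Filter.atTop ∧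
      Filter.Tendsto (fun t => h (γ t)) Filter.atTop (nhds a) := by
  intro w₀ hw₀
  obtain ⟨w, hwD, rfl⟩ := hW
  set W := connectedComponentIn (h ⁻¹' D) w with hWdef
  have hlam0 : lam ≠ 0 := by
    intro hc; rw [hc] at hlam; simp at hlam; linarith
  have hWopen : IsOpen W := (hD.preimage hh).connectedComponentIn
  have hWconn : IsConnected W := by
    exact (isConnected_connectedComponentIn_iff).2 hwD
  have hWsub : W ⊆ h ⁻¹' D := connectedComponentIn_subset _ _
  -- forward and backward invariance
  have hfwd : ∀ x ∈ W, lam * x ∈ W := fun x hx => by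
    rw [← hWinv]; exact ⟨x, hx, rfl⟩
  have hbwd : ∀ x ∈ W, lam⁻¹ * x ∈ W := fun x hx => by
    rw [← hWinv] at hx
    obtain ⟨y, hy, rfl⟩ := hx
    rwa [← mul_assoc, inv_mul_cancel₀ hlam0, one_mul]
  have hzpow : ∀ (n : ℤ) (x : ℂ), x ∈ W → lam ^ n * x ∈ W := by
    intro n
    induction n using Int.induction_on with
    | zero => intro x hx; simpa using hx
    | succ n ih =>
        intro x hx
        have h1 := hfwd _ (ih x hx)
        have h2 : lam ^ ((n : ℤ) + 1) * x = lam * (lam ^ (n : ℤ) * x) := by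
          rw [zpow_add_one₀ hlam0]; ring
        rw [h2]; exact h1
    | pred n ih =>
        intro x hx
        have h1 := hbwd _ (ih x hx)
        have h2 : lam ^ (-(n : ℤ) - 1) * x = lam⁻¹ * (lam ^ (-(n : ℤ)) * x) := by
          rw [zpow_sub_one₀ hlam0]; ring
        rw [h2]; exact h1
  -- path from w₀ to lam * w₀
  have hpc : IsPathConnected W := (hWopen.isConnected_iff_isPathConnected).1 hWconn
  have hjoined : JoinedIn W w₀ (lam * w₀) := hpc.joinedIn w₀ hw₀ (lam * w₀) (hfwd _ hw₀)
  obtain ⟨p, hp⟩ := hjoined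
  set σ : ℝ → ℂ := ⇑p.extend with hσdef
  have hσcont : Continuous σ := p.continuous_extend
  have hσmem : ∀ t : ℝ, σ t ∈ W := by
    intro t
    rw [hσdef, Path.extend]
    exact hp _
  have hσ0 : σ 0 = w₀ := by simp [hσdef]
  have hσ1 : σ 1 = lam * w₀ := by simp [hσdef]
  -- the arc
  set F : ℝ → ℂ := fun t => lam ^ (⌊t⌋ : ℤ) * σ (Int.fract t) with hFdef
  -- F agrees with a nice function on each Icc
  have hFG : ∀ n : ℤ, ∀ x ∈ Icc (n : ℝ) (n + 1), F x = lam ^ n * σ (x - n) := by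
    intro n x hx
    rcases eq_or_lt_of_le hx.2 with hx2 | hx2
    · subst hx2
      have h1 : (⌊(n : ℝ) + 1⌋ : ℤ) = n + 1 := by
        rw [show ((n : ℝ) + 1) = ((n + 1 : ℤ) : ℝ) by push_cast; ring, Int.floor_intCast]
      have h2 : Int.fract ((n : ℝ) + 1) = 0 := by
        rw [show ((n : ℝ) + 1) = ((n + 1 : ℤ) : ℝ) by push_cast; ring, Int.fract_intCast]
      rw [hFdef]; simp only [h1, h2]
      rw [show ((n : ℝ) + 1 - n) = 1 by ring, hσ1, hσ0, zpow_add_one₀ hlam0]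
      ring
    · have hfl : ⌊x⌋ = n := by
        rw [Int.floor_eq_iff]; constructor
        · exact_mod_cast hx.1
        · exact_mod_cast hx2
      rw [hFdef]
      simp only [hfl, Int.fract]
  have hGcont : ∀ n : ℤ, ContinuousOn F (Icc (n : ℝ) (n + 1)) := by
    intro n
    apply ContinuousOn.congr (f := fun x => lam ^ n * σ (x - n))
    · exact (continuous_const.mul (hσcont.comp (continuous_id.sub continuous_const))).continuousOn
    · exact hFG n
  have hFcont : Continuous F := by
    rw [continuous_iff_continuousAt]
    intro x
    set n : ℤ := ⌊x⌋ with hn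
    have hx1 : x ∈ Icc (n : ℝ) (n + 1) :=
      ⟨Int.floor_le x, le_of_lt (Int.lt_floor_add_one x)⟩
    have h2 : ContinuousWithinAt F (Icc ((n : ℝ) - 1) n) x := by
      by_cases hx : x ∈ Icc ((n : ℝ) - 1) n
      · have := hGcont (n - 1)
        rw [show (((n : ℤ) - 1 : ℤ) : ℝ) = (n : ℝ) - 1 by push_cast; ring] at this
        rw [show ((n : ℝ) - 1 + 1) = (n : ℝ) by ring] at this
        exact this x hx
      · apply continuousWithinAt_of_notMem_closure
        rwa [closure_Icc]
    have h3 : ContinuousWithinAt F (Icc (n : ℝ) (n + 1)) x := hGcont n x hx1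
    have h4 : ContinuousWithinAt F (Icc ((n : ℝ) - 1) (n + 1)) x := by
      have := h2.union h3
      rwa [Icc_union_Icc_eq_Icc (by linarith) (by linarith)] at this
    apply h4.continuousAt
    rw [mem_nhds_iff]
    refine ⟨Ioo ((n : ℝ) - 1) (n + 1), Ioo_subset_Icc_self, isOpen_Ioo, ?_⟩
    constructor
    · have : (n : ℝ) ≤ x := Int.floor_le x
      linarith
    · exact Int.lt_floor_add_one x
  have hFmem : ∀ t : ℝ, F t ∈ W := fun t => hzpow _ _ (hσmem _)
  have hF0 : F 0 = w₀ := by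
    rw [hFdef]; simp [hσ0]
  have hFrec : ∀ t : ℝ, F (t + 1) = lam * F t := by
    intro t
    rw [hFdef]
    simp only [Int.floor_add_one, Int.fract_add_one]
    rw [zpow_add_one₀ hlam0]
    ring
  have h0W : (0 : ℂ) ∉ W := fun hc => hz₀ (h0 ▸ hWsub hc)
  -- min modulus of σ on [0,1]
  have hIcc : IsCompact (Icc (0:ℝ) 1) := isCompact_Icc
  obtain ⟨t₀, ht₀, hmin'⟩ := hIcc.exists_isMinOn (nonempty_Icc.2 zero_le_one)
    (continuous_norm.comp hσcont).continuousOn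
  have hmin : ∀ u ∈ Icc (0:ℝ) 1, ‖σ t₀‖ ≤ ‖σ u‖ :=
    fun u hu => hmin' hu
  set m : ℝ := ‖σ t₀‖ with hm
  have hmpos : 0 < m := by
    rw [hm]
    refine norm_pos_iff.2 ?_
    intro hc
    exact h0W (hc ▸ hσmem t₀)
  -- toNat floor tendsto
  have htoNat : Tendsto (fun t : ℝ => (⌊t⌋).toNat) atTop atTop := by
    rw [tendsto_atTop_atTop]
    intro b
    refine ⟨(b : ℝ), fun t ht => ?_⟩
    have : (b : ℤ) ≤ ⌊t⌋ := Int.le_floor.2 (by exact_mod_cast ht)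
    omega
  have habs : ∀ t : ℝ, ‖F t‖ = ‖lam‖ ^ (⌊t⌋ : ℤ) * ‖σ (Int.fract t)‖ := by
    intro t
    rw [hFdef]
    simp [norm_mul, norm_zpow]
  have hfract01 : ∀ t : ℝ, Int.fract t ∈ Icc (0:ℝ) 1 :=
    fun t => ⟨Int.fract_nonneg t, le_of_lt (Int.fract_lt_one t)⟩
  -- |F t| → ∞
  have htend1 : Tendsto (fun t => ‖F t‖) atTop atTop := by
    have hgrow : Tendsto (fun t : ℝ => ‖lam‖ ^ (⌊t⌋).toNat * m) atTop atTop := by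
      apply Tendsto.atTop_mul_const hmpos
      exact (tendsto_pow_atTop_atTop_of_one_lt hlam).comp htoNat
    apply tendsto_atTop_mono' _ _ hgrow
    filter_upwards [eventually_ge_atTop (0:ℝ)] with t ht
    have hfl : (0:ℤ) ≤ ⌊t⌋ := Int.floor_nonneg.2 ht
    have hz : ‖lam‖ ^ (⌊t⌋ : ℤ) = ‖lam‖ ^ (⌊t⌋).toNat := by
      rw [← zpow_natCast, Int.toNat_of_nonneg hfl]
    rw [habs t]
    rw [hz]
    apply mul_le_mul_of_nonneg_left (hmin _ (hfract01 t)) (by positivity)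
  -- h (F t) → a
  have hiter : ∀ (n : ℕ) (x : ℂ), f^[n] (h x) = h (lam ^ n * x) := by
    intro n
    induction n with
    | zero => intro x; simp
    | succ n ih =>
        intro x
        rw [Function.iterate_succ_apply, heq, ih, ← mul_assoc, ← pow_succ]
  set K : Set ℂ := h '' (σ '' Icc (0:ℝ) 1) with hK
  have hKcomp : IsCompact K := (hIcc.image hσcont).image hh
  have hKsub : K ⊆ D := by
    rintro _ ⟨_, ⟨t, _, rfl⟩, rfl⟩
    exact hWsub (hσmem t)
  have hunif : TendstoUniformlyOn (fun (k : ℕ) z => f^[k] z) (fun _ => a) atTop K := by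
    rw [tendstoLocallyUniformlyOn_iff_forall_isCompact hD] at hbasin
    exact hbasin K hKsub hKcomp
  have htend2 : Tendsto (fun t => h (F t)) atTop (nhds a) := by
    rw [Metric.tendsto_nhds]
    intro ε hε
    rw [Metric.tendstoUniformlyOn_iff] at hunif
    obtain ⟨N, hN⟩ := (hunif ε hε).exists_forall_of_atTop
    have := htoNat.eventually_ge_atTop N
    filter_upwards [this, eventually_ge_atTop (0:ℝ)] with t htN ht0
    have hfl : (0:ℤ) ≤ ⌊t⌋ := Int.floor_nonneg.2 ht0
    have hzp : lam ^ (⌊t⌋ : ℤ) = lam ^ (⌊t⌋).toNat := by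
      rw [← zpow_natCast, Int.toNat_of_nonneg hfl]
    have hFt : h (F t) = f^[(⌊t⌋).toNat] (h (σ (Int.fract t))) := by
      rw [hiter]
      show h (lam ^ (⌊t⌋ : ℤ) * σ (Int.fract t)) = h (lam ^ (⌊t⌋).toNat * σ (Int.fract t))
      rw [hzp]
    rw [hFt, dist_comm]
    exact hN _ htN _ ⟨_, ⟨_, hfract01 t, rfl⟩, rfl⟩
  exact ⟨F, hFcont, hFmem, hF0, hFrec, htend1, htend2⟩
end

section
/- Let h be a Schröder map with f∘h = h∘λ, h'(0) ≠ 0, |λ|>1, f(a) = a, and suppose c ∈ ℂ is a critical point of h with h(c) ≠ a. Choose t > 0 so that h is injective (hence h' nonvanishing) on {|w| < t} and ℓ ∈ ℕ with |λ^{-ℓ}c| < t. Then there exists i ∈ {0,…,ℓ-1} such that f^i(h(λ^{-ℓ}c)) is a critical point of f and f^i(h(λ^{-ℓ}c)) ≠ a. -/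
open Complex Filter Set Metric
open scoped Topology

/-- A holomorphic function injective on a ball has nonvanishing derivative there. -/
lemma deriv_ne_zero_of_injOn_ball (h : ℂ → ℂ) (hh : Differentiable ℂ h)
    {t : ℝ} {w₀ : ℂ} (hw : w₀ ∈ Metric.ball (0:ℂ) t)
    (hinj : Set.InjOn h (Metric.ball 0 t)) : deriv h w₀ ≠ 0 := by
  intro hd0
  set g : ℂ → ℂ := fun z => h z - h w₀ with hg_def
  have hg : AnalyticAt ℂ g w₀ := (hh.analyticAt w₀).sub analyticAt_const
  have hball : Metric.ball (0:ℂ) t ∈ 𝓝 w₀ := Metric.isOpen_ball.mem_nhds hw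
  -- the order of vanishing of g at w₀ is finite
  have hnot_top : ¬ (∀ᶠ z in 𝓝 w₀, g z = 0) := by
    intro hev
    have h2 : ∀ᶠ z in 𝓝[≠] w₀, (g z = 0 ∧ z ∈ Metric.ball (0:ℂ) t) ∧ z ≠ w₀ :=
      (eventually_nhdsWithin_of_eventually_nhds (hev.and hball)).and
        (eventually_mem_nhdsWithin.mono fun z hz => hz)
    obtain ⟨z, ⟨hz0, hzb⟩, hzne⟩ := h2.exists
    exact hzne (hinj hzb hw (sub_eq_zero.mp hz0))
  have horder : analyticOrderAt g w₀ ≠ ⊤ := fun ht' => hnot_top (analyticOrderAt_eq_top.mp ht')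
  obtain ⟨n, hn⟩ := Option.ne_none_iff_exists'.mp horder
  obtain ⟨u, hu_an, hu0, hev⟩ := (hg.analyticOrderAt_eq_natCast (n := n)).mp hn
  -- n ≥ 2
  have hgw0 : g w₀ = 0 := by simp [hg_def]
  have hn0 : n ≠ 0 := by
    intro h0
    have := hev.self_of_nhds
    rw [h0, hgw0] at this
    simp at this
    exact hu0 this.symm
  have hderivg : deriv g w₀ = 0 := by
    have : deriv g w₀ = deriv h w₀ := by
      simp [hg_def, deriv_sub_const]
    rw [this, hd0]
  have hn1 : n ≠ 1 := by
    intro h1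
    have hev' : g =ᶠ[𝓝 w₀] fun z => (z - w₀) ^ n • u z := hev
    have h1' : deriv g w₀ = deriv (fun z => (z - w₀) ^ n • u z) w₀ := hev'.deriv_eq
    have hu' : HasDerivAt (fun z => (z - w₀) * u z)
        (1 * u w₀ + (w₀ - w₀) * deriv u w₀) w₀ :=
      ((hasDerivAt_id w₀).sub_const w₀).mul hu_an.differentiableAt.hasDerivAt
    have : deriv (fun z => (z - w₀) ^ n • u z) w₀ = u w₀ := by
      subst h1
      simp only [pow_one, smul_eq_mul]
      rw [hu'.deriv]
      ring
    rw [hderivg, this] at h1'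
    exact hu0 h1'.symm
  have hn2 : 2 ≤ n := by omega
  have hncast : (n : ℂ) ≠ 0 := Nat.cast_ne_zero.mpr hn0
  -- n-th root of u
  set b : ℂ := Complex.exp (Complex.log (u w₀) / n) with hb_def
  have hb0 : b ≠ 0 := Complex.exp_ne_zero _
  have hbn : b ^ n = u w₀ := by
    rw [hb_def, ← Complex.exp_nat_mul, mul_div_cancel₀ _ hncast, Complex.exp_log hu0]
  set φ : ℂ → ℂ := fun z => Complex.exp (Complex.log (u z / u w₀) / n) * b with hφ_def
  set ψ : ℂ → ℂ := fun z => (z - w₀) * φ z with hψ_def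
  obtain ⟨p, hp⟩ := id hu_an
  have hφ_strict : ∃ D : ℂ, HasStrictDerivAt φ D w₀ :=
    ⟨_, ((((hp.hasStrictDerivAt.div_const (u w₀)).clog
      (by rw [div_self hu0]; exact Complex.one_mem_slitPlane)).div_const (n:ℂ)).cexp).mul_const b⟩
  obtain ⟨D, hφD⟩ := hφ_strict
  have hφw0 : φ w₀ = b := by simp [hφ_def, div_self hu0, Complex.log_one]
  have hψ_strict : HasStrictDerivAt ψ b w₀ := by
    have h' : HasStrictDerivAt (fun y => (y - w₀) * φ y) (1 * φ w₀ + (w₀ - w₀) * D) w₀ :=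
      HasStrictDerivAt.mul ((hasStrictDerivAt_id w₀).sub_const w₀) hφD
    have hval : 1 * φ w₀ + (w₀ - w₀) * D = b := by rw [hφw0]; ring
    exact hval ▸ h'
  have hψ0 : ψ w₀ = 0 := by simp [hψ_def]
  have hmap : map ψ (𝓝 w₀) = 𝓝 (0:ℂ) := by
    rw [hψ_strict.map_nhds_eq hb0, hψ0]
  -- good neighborhood
  have hslit : ∀ᶠ z in 𝓝 w₀, u z / u w₀ ∈ Complex.slitPlane := by
    have hcont : ContinuousAt (fun z => u z / u w₀) w₀ :=
      hu_an.continuousAt.div_const _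
    have hmem : u w₀ / u w₀ ∈ Complex.slitPlane := by
      rw [div_self hu0]; exact Complex.one_mem_slitPlane
    exact hcont.eventually_mem (Complex.isOpen_slitPlane.mem_nhds hmem)
  have hV : ∀ᶠ z in 𝓝 w₀, g z = ψ z ^ n ∧ z ∈ Metric.ball (0:ℂ) t := by
    filter_upwards [hev, hslit, hball] with z hz1 hz2 hz3
    refine ⟨?_, hz3⟩
    have huz : u z / u w₀ ≠ 0 := Complex.slitPlane_ne_zero hz2
    have huz' : u z ≠ 0 := fun h0 => huz (by rw [h0, zero_div])
    have : ψ z ^ n = (z - w₀) ^ n * u z := by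
      rw [hψ_def]
      simp only
      rw [mul_pow, hφ_def]
      simp only
      rw [mul_pow, ← Complex.exp_nat_mul, mul_div_cancel₀ _ hncast,
        Complex.exp_log huz, hbn, div_mul_cancel₀ _ hu0]
    rw [this, hz1, smul_eq_mul]
  have himg : ψ '' {z | g z = ψ z ^ n ∧ z ∈ Metric.ball (0:ℂ) t} ∈ 𝓝 (0:ℂ) := by
    rw [← hmap]
    exact Filter.image_mem_map hV
  obtain ⟨r, hr0, hrsub⟩ := Metric.mem_nhds_iff.mp himg
  -- root of unity
  set ω : ℂ := Complex.exp ((2 * Real.pi / n : ℝ) * Complex.I) with hω_def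
  have hωn : ω ^ n = 1 := by
    rw [hω_def, ← Complex.exp_nat_mul]
    have hcast : (n : ℂ) * (((2 * Real.pi / n : ℝ) : ℂ) * Complex.I)
        = 2 * (Real.pi : ℂ) * Complex.I := by
      push_cast
      field_simp
    rw [hcast]
    exact Complex.exp_two_pi_mul_I
  have hω1 : ω ≠ 1 := by
    rw [hω_def]
    intro h1
    rw [Complex.exp_eq_one_iff] at h1
    obtain ⟨k, hk⟩ := h1
    have him : (2 * Real.pi / n : ℝ) = k * (2 * Real.pi) := by
      have := congrArg Complex.im hk
      simpa using this
    have hπ : (0:ℝ) < 2 * Real.pi := by positivity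
    have hnr : (2:ℝ) ≤ n := by exact_mod_cast hn2
    have hkval : (k : ℝ) = 1 / n := by
      have h' : (k:ℝ) * (2 * Real.pi) = (1 / n) * (2 * Real.pi) := by
        rw [← him]
        field_simp
      exact mul_right_cancel₀ (ne_of_gt hπ) h'
    have h1 : (0:ℝ) < (k:ℝ) := by
      rw [hkval]
      exact div_pos one_pos (by linarith)
    have h2 : (k:ℝ) < 1 := by
      rw [hkval]
      rw [div_lt_one (by linarith)]
      linarith
    have h1' : 0 < k := by exact_mod_cast h1
    have h2' : k < 1 := by exact_mod_cast h2
    omega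
  have habsω : ‖ω‖ = 1 := by
    rw [hω_def, Complex.norm_exp]
    simp
  set ζ : ℂ := ((r / 2 : ℝ) : ℂ) with hζ_def
  have hζ0 : ζ ≠ 0 := by
    rw [hζ_def]
    exact_mod_cast (by positivity : (r/2 : ℝ) ≠ 0)
  have habsζ : ‖ζ‖ = r / 2 := by
    rw [hζ_def, Complex.norm_real, Real.norm_of_nonneg (by positivity)]
  have hζmem : ζ ∈ Metric.ball (0:ℂ) r := by
    rw [mem_ball_zero_iff]
    rw [habsζ]
    linarith
  have hζωmem : ζ * ω ∈ Metric.ball (0:ℂ) r := by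
    rw [mem_ball_zero_iff, norm_mul, habsω, habsζ, mul_one]
    linarith
  obtain ⟨w₁, hw₁S, hψ₁⟩ := hrsub hζmem
  obtain ⟨w₂, hw₂S, hψ₂⟩ := hrsub hζωmem
  have hne : w₁ ≠ w₂ := by
    intro e
    rw [e, hψ₂] at hψ₁
    exact hω1 ((mul_right_eq_self₀.mp hψ₁).resolve_right hζ0)
  have hgeq : g w₁ = g w₂ := by
    rw [hw₁S.1, hw₂S.1, hψ₁, hψ₂, mul_pow, hωn, mul_one]
  have hheq : h w₁ = h w₂ := by
    have := hgeq
    simp only [hg_def] at this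
    exact sub_left_inj.mp this
  exact hne (hinj hw₁S.2 hw₂S.2 hheq)

/-- If `c` is a critical point of the Schröder map `h` with `h(c) ≠ a`,
`h` is injective on `{|w| < t}` and `|λ^{-ℓ}c| < t`, then for some `i ∈ {0,…,ℓ-1}` the
point `f^i(h(λ^{-ℓ}c))` is a critical point of `f` different from `a`. -/
theorem stmt_12 (f h : ℂ → ℂ) (hf : Differentiable ℂ f) (hh : Differentiable ℂ h)
    (lam a : ℂ) (hlam : 1 < ‖lam‖) (heq : ∀ w : ℂ, f (h w) = h (lam * w))
    (hfa : f a = a) (c : ℂ) (hc : deriv h c = 0) (hca : h c ≠ a)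
    (t : ℝ) (ht : 0 < t) (hinj : Set.InjOn h (Metric.ball 0 t))
    (ℓ : ℕ) (hℓ : ‖lam⁻¹ ^ ℓ * c‖ < t) :
    ∃ i : ℕ, i < ℓ ∧ deriv f (f^[i] (h (lam⁻¹ ^ ℓ * c))) = 0 ∧
      f^[i] (h (lam⁻¹ ^ ℓ * c)) ≠ a := by
  have hlam0 : lam ≠ 0 := by
    intro h0
    rw [h0] at hlam
    simp at hlam
    norm_num at hlam
  set w₀ : ℂ := lam⁻¹ ^ ℓ * c with hw₀_def
  have hw₀mem : w₀ ∈ Metric.ball (0:ℂ) t := by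
    rw [mem_ball_zero_iff]
    exact hℓ
  have hlw₀ : lam ^ ℓ * w₀ = c := by
    rw [hw₀_def, ← mul_assoc, ← mul_pow, mul_inv_cancel₀ hlam0, one_pow, one_mul]
  -- iterated functional equation
  have hiter : ∀ (k : ℕ) (w : ℂ), f^[k] (h w) = h (lam ^ k * w) := by
    intro k
    induction k with
    | zero => intro w; simp
    | succ k ih =>
      intro w
      rw [Function.iterate_succ_apply', ih, heq, ← mul_assoc, pow_succ, mul_comm (lam ^ k) lam]
  -- derivative of the iterate composed with h
  have hchain : ∀ k : ℕ, HasDerivAt (fun w => f^[k] (h w))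
      ((∏ i ∈ Finset.range k, deriv f (f^[i] (h w₀))) * deriv h w₀) w₀ := by
    intro k
    induction k with
    | zero => simpa using hh.differentiableAt.hasDerivAt
    | succ k ih =>
      have hstep : HasDerivAt f (deriv f (f^[k] (h w₀))) (f^[k] (h w₀)) :=
        hf.differentiableAt.hasDerivAt
      have := hstep.comp w₀ ih
      simp only [Function.comp_def, ← Function.iterate_succ_apply' f] at this
      refine this.congr_deriv ?_
      rw [Finset.prod_range_succ]
      ring
  -- the other expression for the derivative
  have hother : HasDerivAt (fun w => f^[ℓ] (h w)) (lam ^ ℓ * deriv h c) w₀ := by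
    have h1 : (fun w => f^[ℓ] (h w)) = fun w => h (lam ^ ℓ * w) := by
      funext w; exact hiter ℓ w
    rw [h1]
    have h2 : HasDerivAt (fun w => h (lam ^ ℓ * w)) (deriv h (lam ^ ℓ * w₀) * lam ^ ℓ) w₀ := by
      have := (hh.differentiableAt.hasDerivAt (x := lam ^ ℓ * w₀)).comp w₀
        ((hasDerivAt_id w₀).const_mul (lam ^ ℓ))
      simp only [mul_one] at this
      exact this
    rw [hlw₀] at h2
    convert h2 using 1
    ring
  have hprod : (∏ i ∈ Finset.range ℓ, deriv f (f^[i] (h w₀))) * deriv h w₀ = 0 := by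
    have := (hchain ℓ).unique hother
    rw [this, hc, mul_zero]
  have hhderiv : deriv h w₀ ≠ 0 := deriv_ne_zero_of_injOn_ball h hh hw₀mem hinj
  have hprod0 : (∏ i ∈ Finset.range ℓ, deriv f (f^[i] (h w₀))) = 0 := by
    rcases mul_eq_zero.mp hprod with h1 | h2
    · exact h1
    · exact absurd h2 hhderiv
  obtain ⟨i, hi, hdf⟩ := Finset.prod_eq_zero_iff.mp hprod0
  refine ⟨i, Finset.mem_range.mp hi, hdf, ?_⟩
  intro hia
  apply hca
  have hfix : ∀ k : ℕ, f^[k] a = a := fun k => Function.iterate_fixed hfa k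
  have hdecomp : f^[ℓ] (h w₀) = f^[ℓ - i] (f^[i] (h w₀)) := by
    rw [← Function.iterate_add_apply]
    congr 1
    have := Finset.mem_range.mp hi
    omega
  calc h c = h (lam ^ ℓ * w₀) := by rw [hlw₀]
  _ = f^[ℓ] (h w₀) := (hiter ℓ w₀).symm
  _ = f^[ℓ - i] (f^[i] (h w₀)) := hdecomp
  _ = f^[ℓ - i] a := by rw [hia]
  _ = a := hfix _
end

section
/- Let f be a rational function of degree d ≥ 2 with a repelling fixed point z₀ of multiplier λ, and h the Schröder map at z₀. If D is a Fatou component with f(D) = D and f : D → D injective (a rotation domain), and W is a component of h⁻¹(D) such that for each k, f^k maps the component D^{-k} (containing h(λ^{-k}A_r)) univalently onto D, and h is injective on {|w| < t}, then h is injective on {w ∈ A_r : |w| < |λ|^k t} for every k; consequently A_r contains no critical point of h. -/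
open Complex Set Filter Metric
open scoped Topology

/-- A holomorphic function injective on an open neighborhood has nonzero derivative. -/
lemma inj_deriv_ne_zero_aux (h : ℂ → ℂ) (hh : Differentiable ℂ h) {U : Set ℂ}
    (hU : IsOpen U) {c : ℂ} (hc : c ∈ U) (hinj : Set.InjOn h U) : deriv h c ≠ 0 := by
  intro h0
  have han : AnalyticAt ℂ (fun z => h z - h c) c :=
    ((hh.analyticAt c)).sub analyticAt_const
  -- not eventually zero
  have hnev : ¬ ∀ᶠ z in 𝓝 c, h z - h c = 0 := by
    intro hev
    obtain ⟨ε, hε, hball⟩ := Metric.eventually_nhds_iff.mp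
      (hev.and (hU.eventually_mem hc))
    set w : ℂ := c + ((ε / 2 : ℝ) : ℂ) with hw_def
    have habs : ‖((ε / 2 : ℝ) : ℂ)‖ = ε / 2 := by
      rw [Complex.norm_real, Real.norm_eq_abs]; exact abs_of_pos (half_pos hε)
    have hw : dist w c < ε := by
      simp only [hw_def, Complex.dist_eq, add_sub_cancel_left, habs]
      linarith
    have h1 := hball hw
    have h2 := hball (by simpa using hε : dist c c < ε)
    have heqwc : w = c := hinj h1.2 h2.2 (sub_eq_zero.mp h1.1)
    have : ((ε / 2 : ℝ) : ℂ) = 0 := by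
      have := heqwc; rw [hw_def] at this; linear_combination this
    have : (ε / 2 : ℝ) = 0 := by exact_mod_cast this
    linarith
  obtain ⟨n, g, hg_an, hg_ne, hg_eq⟩ :=
    (han.exists_eventuallyEq_pow_smul_nonzero_iff).mpr hnev
  have hn0 : n ≠ 0 := by
    rintro rfl
    have := hg_eq.self_of_nhds
    simp only [sub_self, pow_zero, one_smul] at this
    exact hg_ne this.symm
  have hn1 : n ≠ 1 := by
    rintro rfl
    have h1 : HasDerivAt (fun z : ℂ => z - c) 1 c := (hasDerivAt_id c).sub_const c
    have h2 : HasDerivAt g (deriv g c) c := hg_an.differentiableAt.hasDerivAt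
    have hd : HasDerivAt (fun z => (z - c) ^ 1 • g z) (g c) c := by
      simp only [pow_one, smul_eq_mul]
      have := h1.fun_mul h2
      simpa using this
    have hde : deriv (fun z => h z - h c) c = g c := by
      rw [Filter.EventuallyEq.deriv_eq hg_eq]
      exact hd.deriv
    rw [deriv_sub_const, h0] at hde
    exact hg_ne hde.symm
  have hn2 : 2 ≤ n := by omega
  have hNn : (n : ℂ) ≠ 0 := Nat.cast_ne_zero.mpr hn0
  -- n-th root of g c
  set ρ : ℂ := Complex.exp (Complex.log (g c) / n) with hρ_def
  have hρ_ne : ρ ≠ 0 := Complex.exp_ne_zero _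
  have hρn : ρ ^ n = g c := by
    rw [hρ_def, ← Complex.exp_nat_mul, mul_div_cancel₀ _ hNn, Complex.exp_log hg_ne]
  -- n-th root of g z / g c
  set φ : ℂ → ℂ := fun z => Complex.exp (Complex.log (g z / g c) / n) with hφ_def
  have hφc : φ c = 1 := by
    simp [hφ_def, div_self hg_ne, Complex.log_one]
  have hφ_an : AnalyticAt ℂ φ c := by
    have hdiv : AnalyticAt ℂ (fun z => g z / g c) c :=
      hg_an.div analyticAt_const hg_ne
    have hmem : g c / g c ∈ Complex.slitPlane := by
      rw [div_self hg_ne]; exact Complex.one_mem_slitPlane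
    have hlog : AnalyticAt ℂ (fun z => Complex.log (g z / g c)) c :=
      hdiv.clog hmem
    exact analyticAt_cexp.comp (hlog.div analyticAt_const hNn)
  set ψ : ℂ → ℂ := fun z => (z - c) * (ρ * φ z) with hψ_def
  have hψ_an : AnalyticAt ℂ ψ c :=
    ((analyticAt_id.sub analyticAt_const).mul (analyticAt_const.mul hφ_an))
  have hψc : ψ c = 0 := by simp [hψ_def]
  have hψ_deriv : deriv ψ c = ρ := by
    have h1 : HasDerivAt (fun z : ℂ => z - c) 1 c := (hasDerivAt_id c).sub_const c
    have h2 : HasDerivAt (fun z => ρ * φ z) (ρ * deriv φ c) c :=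
      (hφ_an.differentiableAt.hasDerivAt).const_mul ρ
    have := (h1.fun_mul h2).deriv
    simpa [hφc] using this
  -- factorization h z - h c = ψ z ^ n near c
  have hgz_ne : ∀ᶠ z in 𝓝 c, g z ≠ 0 :=
    hg_an.continuousAt.eventually_ne hg_ne
  have hfact : ∀ᶠ z in 𝓝 c, h z - h c = ψ z ^ n := by
    filter_upwards [hg_eq, hgz_ne] with z hz hgz
    have hφn : φ z ^ n = g z / g c := by
      rw [hφ_def]
      rw [← Complex.exp_nat_mul, mul_div_cancel₀ _ hNn,
        Complex.exp_log (div_ne_zero hgz hg_ne)]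
    have : ψ z ^ n = (z - c) ^ n * (ρ ^ n * φ z ^ n) := by
      rw [hψ_def]; simp only [mul_pow]
    rw [hz, this, hρn, hφn, smul_eq_mul]
    field_simp
  -- open mapping
  rcases hψ_an.eventually_constant_or_nhds_le_map_nhds with hconst | hmap
  · have : deriv ψ c = 0 := by
      have heq : ψ =ᶠ[𝓝 c] fun _ => ψ c := hconst
      rw [heq.deriv_eq]; simp
    rw [hψ_deriv] at this
    exact hρ_ne this
  · rw [hψc] at hmap
    have hV : U ∩ {z | h z - h c = ψ z ^ n} ∈ 𝓝 c :=
      Filter.inter_mem (hU.mem_nhds hc) hfact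
    have himg : ψ '' (U ∩ {z | h z - h c = ψ z ^ n}) ∈ 𝓝 (0 : ℂ) := by
      apply hmap
      exact Filter.mem_map.mpr (Filter.mem_of_superset hV (Set.subset_preimage_image _ _))
    obtain ⟨ε, hε, hball⟩ := Metric.mem_nhds_iff.mp himg
    set ζ : ℂ := Complex.exp (2 * Real.pi * Complex.I / n) with hζ_def
    have hprim : IsPrimitiveRoot ζ n := Complex.isPrimitiveRoot_exp n hn0
    have hζn : ζ ^ n = 1 := hprim.pow_eq_one
    have hζ1 : ζ ≠ 1 := hprim.ne_one (by omega)
    have hζabs : ‖ζ‖ = 1 := by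
      have := Complex.norm_eq_one_of_pow_eq_one hζn hn0
      simpa using this
    set v : ℂ := ((ε / 2 : ℝ) : ℂ) with hv_def
    have hv_ne : v ≠ 0 := by
      simp only [hv_def, ne_eq, Complex.ofReal_eq_zero]
      intro hcon; linarith
    have hv_mem : v ∈ Metric.ball (0 : ℂ) ε := by
      simp only [hv_def, Metric.mem_ball, dist_zero_right,
        Complex.norm_real, Real.norm_eq_abs]
      rw [abs_of_pos (half_pos hε)]; linarith
    have hzv_mem : ζ * v ∈ Metric.ball (0 : ℂ) ε := by
      simp only [Metric.mem_ball, dist_zero_right, norm_mul, hζabs,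
        one_mul, hv_def, Complex.norm_real, Real.norm_eq_abs]
      rw [abs_of_pos (half_pos hε)]; linarith
    obtain ⟨a, haV, ha⟩ := hball hv_mem
    obtain ⟨b, hbV, hb⟩ := hball hzv_mem
    have hha : h a - h c = v ^ n := by rw [haV.2, ha]
    have hhb : h b - h c = v ^ n := by
      rw [hbV.2, hb, mul_pow, hζn, one_mul]
    have hab : a = b := hinj haV.1 hbV.1 (by linear_combination hha - hhb)
    have : v = ζ * v := by
      have h4 := congrArg ψ hab
      rw [ha, hb] at h4; exact h4
    have hz0 : (ζ - 1) * v = 0 := by linear_combination -this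
    rcases mul_eq_zero.mp hz0 with h' | h'
    · exact hζ1 (sub_eq_zero.mp h')
    · exact hv_ne h'

/-- With `h` the Schröder map, `A_r` (open) such that
`h(λ^{-k} A_r) ⊆ D^{-k}` and `f^k` univalent on `D^{-k}`, and `h` injective on
`{|w| < t}`, the factorization `h = f^k ∘ h ∘ λ^{-k}` makes `h` injective on
`{w ∈ A_r : |w| < |λ|^k t}` for every `k`; consequently `A_r` contains no critical
point of `h`. -/
theorem stmt_17 (f h : ℂ → ℂ) (hh : Differentiable ℂ h)
    (lam : ℂ) (hlam : 1 < ‖lam‖)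
    (heq : ∀ w : ℂ, f (h w) = h (lam * w))
    (t : ℝ) (ht : 0 < t) (hinj : Set.InjOn h (Metric.ball 0 t))
    (Ar : Set ℂ) (hAr : IsOpen Ar) (Dk : ℕ → Set ℂ)
    (hmaps : ∀ k : ℕ, ∀ w ∈ Ar, h (lam⁻¹ ^ k * w) ∈ Dk k)
    (hfinj : ∀ k : ℕ, Set.InjOn (f^[k]) (Dk k)) :
    (∀ k : ℕ, Set.InjOn h (Ar ∩ Metric.ball 0 (‖lam‖ ^ k * t))) ∧
    ∀ c ∈ Ar, deriv h c ≠ 0 := by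
  have hlam_ne : lam ≠ 0 := by
    intro hcon; rw [hcon] at hlam; simp at hlam; linarith
  -- key iterate identity
  have hiter : ∀ k : ℕ, ∀ w : ℂ, f^[k] (h w) = h (lam ^ k * w) := by
    intro k
    induction k with
    | zero => intro w; simp
    | succ k ih =>
      intro w
      rw [Function.iterate_succ_apply, heq, ih, pow_succ]
      ring_nf
  have hfac : ∀ k : ℕ, ∀ w : ℂ, h w = f^[k] (h (lam⁻¹ ^ k * w)) := by
    intro k w
    rw [hiter k]
    congr 1
    rw [← mul_assoc, ← mul_pow, mul_inv_cancel₀ hlam_ne, one_pow, one_mul]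
  have hinjk : ∀ k : ℕ, Set.InjOn h (Ar ∩ Metric.ball 0 (‖lam‖ ^ k * t)) := by
    intro k x hx y hy hxy
    have hx' : lam⁻¹ ^ k * x ∈ Metric.ball (0 : ℂ) t := by
      simp only [Metric.mem_ball, dist_zero_right, norm_mul, norm_pow,
        norm_inv]
      have hxb : ‖x‖ < ‖lam‖ ^ k * t := by
        simpa [Complex.dist_eq] using hx.2
      have hpos : (0:ℝ) < ‖lam‖ ^ k := pow_pos (by linarith) k
      rw [inv_pow, inv_mul_lt_iff₀ hpos]
      linarith
    have hy' : lam⁻¹ ^ k * y ∈ Metric.ball (0 : ℂ) t := by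
      simp only [Metric.mem_ball, dist_zero_right, norm_mul, norm_pow,
        norm_inv]
      have hyb : ‖y‖ < ‖lam‖ ^ k * t := by
        simpa [Complex.dist_eq] using hy.2
      have hpos : (0:ℝ) < ‖lam‖ ^ k := pow_pos (by linarith) k
      rw [inv_pow, inv_mul_lt_iff₀ hpos]
      linarith
    have h1 : f^[k] (h (lam⁻¹ ^ k * x)) = f^[k] (h (lam⁻¹ ^ k * y)) := by
      rw [← hfac, ← hfac, hxy]
    have h2 : h (lam⁻¹ ^ k * x) = h (lam⁻¹ ^ k * y) :=
      (hfinj k) (hmaps k x hx.1) (hmaps k y hy.1) h1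
    have h3 : lam⁻¹ ^ k * x = lam⁻¹ ^ k * y := hinj hx' hy' h2
    have : (lam⁻¹ : ℂ) ^ k ≠ 0 := pow_ne_zero _ (inv_ne_zero hlam_ne)
    exact mul_left_cancel₀ this h3
  refine ⟨hinjk, ?_⟩
  intro c hc
  obtain ⟨k, hk⟩ := pow_unbounded_of_one_lt (‖c‖ / t) hlam
  have hck : c ∈ Metric.ball (0 : ℂ) (‖lam‖ ^ k * t) := by
    simp only [Metric.mem_ball, dist_zero_right]
    rw [div_lt_iff₀ ht] at hk
    linarith
  exact inj_deriv_ne_zero_aux h hh (hAr.inter Metric.isOpen_ball) ⟨hc, hck⟩ (hinjk k)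
end
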